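/- Let V be an r-dimensional subspace of Euclidean R^d and W a (d−r)-dimensional subspace with ∠(V,W) > 0 (i.e. V ∩ W = {0}). Then for any r-dimensional subspace V' with d_H(V,V') < ∠(V,W)/(2r), one has V' ∩ W = {0}. In particular, the set of r-dimensional subspaces meeting W trivially is open in Gr(r,d). -/

import Mathlib

open scoped RealInnerProductSpace

noncomputable section

abbrev Euc (d : ℕ) := EuclideanSpace ℝ (Fin d)

/-- Norm of the wedge product of a family of vectors (square root of Gram determinant). -/
def wnorm {d : ℕ} {ι : Type*} [Fintype ι] [DecidableEq ι] (x : ι → Euc d) : ℝ :=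
  Real.sqrt (Matrix.of fun i j => ⟪x i, x j⟫).det

/-- `d_H(V, V') = sup` over unit vectors `v ∈ V` of `dist(v, V')`. -/
def dH {d : ℕ} (V V' : Submodule ℝ (Euc d)) : ℝ :=
  sSup {c | ∃ v ∈ V, ‖v‖ = 1 ∧ c = Metric.infDist v (V' : Set (Euc d))}

namespace Wedge
open Matrix

variable {d : ℕ} {ι : Type*} [Fintype ι] [DecidableEq ι]

def gram (x : ι → Euc d) : Matrix ι ι ℝ := Matrix.of fun i j => ⟪x i, x j⟫

lemma gram_apply (x : ι → Euc d) (i j : ι) : gram x i j = ⟪x i, x j⟫ := rfl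

lemma wnorm_eq (x : ι → Euc d) : wnorm x = Real.sqrt (gram x).det := rfl

lemma wnorm_nonneg (x : ι → Euc d) : 0 ≤ wnorm x := Real.sqrt_nonneg _

lemma gram_comp_equiv {ι' : Type*} [Fintype ι'] [DecidableEq ι'] (x : ι → Euc d) (σ : ι' ≃ ι) :
    gram (x ∘ σ) = (gram x).submatrix σ σ := rfl

lemma wnorm_comp_equiv {ι' : Type*} [Fintype ι'] [DecidableEq ι'] (x : ι → Euc d) (σ : ι' ≃ ι) :
    wnorm (x ∘ σ) = wnorm x := by
  rw [wnorm_eq, wnorm_eq, gram_comp_equiv, Matrix.det_submatrix_equiv_self]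

lemma gram_mulVec (x : ι → Euc d) (c : ι → ℝ) (i : ι) :
    (gram x *ᵥ c) i = ⟪x i, ∑ j, c j • x j⟫ := by
  simp only [Matrix.mulVec, dotProduct, gram_apply, inner_sum, real_inner_smul_right]
  exact Finset.sum_congr rfl fun j _ => mul_comm _ _

lemma det_gram_eq_zero_of_dep {x : ι → Euc d} (h : ¬ LinearIndependent ℝ x) :
    (gram x).det = 0 := by
  obtain ⟨g, hsum, i0, hg⟩ := Fintype.not_linearIndependent_iff.mp h
  refine Matrix.exists_mulVec_eq_zero_iff.mp ⟨g, fun h0 => hg (congrFun h0 i0), ?_⟩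
  funext i
  rw [gram_mulVec, hsum]
  simp

lemma wnorm_eq_zero_of_dep {x : ι → Euc d} (h : ¬ LinearIndependent ℝ x) : wnorm x = 0 := by
  rw [wnorm_eq, det_gram_eq_zero_of_dep h, Real.sqrt_zero]

lemma dot_gram (x : ι → Euc d) (c : ι → ℝ) :
    dotProduct c (gram x *ᵥ c) = ‖∑ i, c i • x i‖ ^ 2 := by
  rw [← real_inner_self_eq_norm_sq, sum_inner]
  simp only [dotProduct, gram_mulVec, real_inner_smul_left]

lemma gram_posDef {x : ι → Euc d} (h : LinearIndependent ℝ x) : (gram x).PosDef := by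
  refine Matrix.posDef_iff_dotProduct_mulVec.mpr ⟨?_, ?_⟩
  · ext i j
    rw [Matrix.conjTranspose_apply, gram_apply, gram_apply, star_trivial]
    exact real_inner_comm _ _
  · intro c hc
    rw [star_trivial, dot_gram]
    have hne : ∑ i, c i • x i ≠ 0 := by
      intro h0
      exact hc (funext fun i => by
        simpa using Fintype.linearIndependent_iff.mp h c h0 i)
    exact pow_pos (norm_pos_iff.mpr hne) 2

lemma wnorm_pos {x : ι → Euc d} (h : LinearIndependent ℝ x) : 0 < wnorm x :=
  Real.sqrt_pos.mpr (gram_posDef h).det_pos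

lemma gram_of_comb (x : ι → Euc d) (A : Matrix ι ι ℝ) :
    gram (fun i => ∑ j, A j i • x j) = Aᵀ * gram x * A := by
  ext i k
  rw [gram_apply, inner_sum]
  simp only [real_inner_smul_right, sum_inner, real_inner_smul_left]
  simp only [Matrix.mul_apply, Matrix.transpose_apply, Finset.sum_mul, gram_apply]
  refine Finset.sum_congr rfl fun l _ => ?_
  exact Finset.sum_congr rfl fun j _ => by ring


lemma wnorm_of_comb (x : ι → Euc d) (A : Matrix ι ι ℝ) :
    wnorm (fun i => ∑ j, A j i • x j) = |A.det| * wnorm x := by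
  rw [wnorm_eq, wnorm_eq, gram_of_comb, Matrix.det_mul, Matrix.det_mul, Matrix.det_transpose]
  rw [show A.det * (gram x).det * A.det = A.det ^ 2 * (gram x).det by ring,
    Real.sqrt_mul (sq_nonneg _), Real.sqrt_sq_eq_abs]


def consO (a : Euc d) (t : ι → Euc d) : Option ι → Euc d := fun o => o.elim a t

@[simp] lemma consO_none (a : Euc d) (t : ι → Euc d) : consO a t none = a := rfl
@[simp] lemma consO_some (a : Euc d) (t : ι → Euc d) (j : ι) : consO a t (some j) = t j := rfl

lemma wnorm_consO_of_parts (a : Euc d) (t : ι → Euc d) (g h : Euc d) (ha : a = g + h)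
    (hg : ∀ j, ⟪g, t j⟫ = 0) (hgh : ⟪g, h⟫ = 0)
    (hh : h ∈ Submodule.span ℝ (Set.range t)) :
    wnorm (consO a t) = ‖g‖ * wnorm t := by
  obtain ⟨c, hc⟩ := (Submodule.mem_span_range_iff_exists_fun ℝ).mp hh
  set M := gram (consO h t) with hM
  have hdep : ¬ LinearIndependent ℝ (consO h t) := by
    intro hind
    have hzero : ∑ o : Option ι, (fun o => Option.elim o (1:ℝ) (fun j => -(c j))) o • consO h t o = 0 := by
      rw [Fintype.sum_option]
      simp [← hc]
    have := Fintype.linearIndependent_iff.mp hind _ hzero none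
    norm_num at this
  have hdet0 : M.det = 0 := det_gram_eq_zero_of_dep hdep
  set e1 : Option ι → ℝ := Pi.single (M := fun _ => ℝ) none 1 with he1
  have hgt : ∀ j, ⟪t j, g⟫ = 0 := fun j => by rw [real_inner_comm]; exact hg j
  have key : gram (consO a t) = M.updateRow none (M none + ‖g‖ ^ 2 • e1) := by
    ext i j
    cases i with
    | some i' =>
      rw [Matrix.updateRow_ne (Option.some_ne_none i')]
      cases j with
      | some j' => rfl
      | none =>
        show ⟪t i', a⟫ = ⟪t i', h⟫
        rw [ha, inner_add_right, hgt, zero_add]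
    | none =>
      rw [Matrix.updateRow_self]
      cases j with
      | some j' =>
        show ⟪a, t j'⟫ = ⟪h, t j'⟫ + (‖g‖^2 • e1) (some j')
        rw [ha, inner_add_left, hg, zero_add, he1, Pi.smul_apply,
          Pi.single_eq_of_ne (Option.some_ne_none j'), smul_zero, add_zero]
      | none =>
        show ⟪a, a⟫ = ⟪h, h⟫ + (‖g‖^2 • e1) none
        rw [he1, Pi.smul_apply, Pi.single_eq_same, smul_eq_mul, mul_one, ha,
          real_inner_add_add_self, hgh, real_inner_self_eq_norm_sq]
        ring
  have hM' : (M.updateRow none e1).det = (gram t).det := by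
    have hsub : (M.updateRow none e1).submatrix
        (Equiv.optionEquivSumPUnit.{0} ι).symm (Equiv.optionEquivSumPUnit.{0} ι).symm =
        Matrix.fromBlocks (gram t) (Matrix.of fun i _ => (⟪t i, h⟫ : ℝ)) 0 1 := by
      ext i j
      cases i with
      | inl i' =>
        cases j with
        | inl j' =>
          show (M.updateRow none e1) (some i') (some j') = _
          rw [Matrix.updateRow_ne (Option.some_ne_none i')]
          rfl
        | inr u =>
          show (M.updateRow none e1) (some i') none = _
          rw [Matrix.updateRow_ne (Option.some_ne_none i')]
          rfl
      | inr u =>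
        cases j with
        | inl j' =>
          show (M.updateRow none e1) none (some j') = _
          rw [Matrix.updateRow_self, he1, Pi.single_eq_of_ne (Option.some_ne_none j')]
          rfl
        | inr u' =>
          show (M.updateRow none e1) none none = _
          rw [Matrix.updateRow_self, he1, Pi.single_eq_same]
          rfl
    rw [← Matrix.det_submatrix_equiv_self (Equiv.optionEquivSumPUnit.{0} ι).symm, hsub,
      Matrix.det_fromBlocks_zero₂₁, Matrix.det_one, mul_one]
  have hdet : (gram (consO a t)).det = ‖g‖^2 * (gram t).det := by
    rw [key, Matrix.det_updateRow_add, Matrix.det_updateRow_smul,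
      Matrix.updateRow_eq_self, hdet0, hM', zero_add]
  rw [wnorm_eq, hdet, Real.sqrt_mul (sq_nonneg _), Real.sqrt_sq (norm_nonneg _), wnorm_eq]


lemma wnorm_consO_eq (a : Euc d) (t : ι → Euc d) :
    wnorm (consO a t) =
      ‖a - (Submodule.orthogonalProjection (Submodule.span ℝ (Set.range t)) a : Euc d)‖ * wnorm t := by
  set S := Submodule.span ℝ (Set.range t) with hS
  set h : Euc d := (Submodule.orthogonalProjection S a : Euc d) with hh
  have hmem : h ∈ S := SetLike.coe_mem _
  have hperp : a - h ∈ Sᗮ := Submodule.sub_starProjection_mem_orthogonal (K := S) a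
  refine wnorm_consO_of_parts a t (a - h) h (by abel) ?_ ?_ hmem
  · intro j
    have htj : t j ∈ S := Submodule.subset_span (Set.mem_range_self j)
    exact Submodule.inner_left_of_mem_orthogonal htj hperp
  · exact Submodule.inner_left_of_mem_orthogonal hmem hperp

lemma wnorm_consO_le (a : Euc d) (t : ι → Euc d) :
    wnorm (consO a t) ≤ ‖a‖ * wnorm t := by
  rw [wnorm_consO_eq]
  refine mul_le_mul_of_nonneg_right ?_ (wnorm_nonneg t)
  set S := Submodule.span ℝ (Set.range t)
  set h : Euc d := (Submodule.orthogonalProjection S a : Euc d) with hh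
  have hperp : a - h ∈ Sᗮ := Submodule.sub_starProjection_mem_orthogonal (K := S) a
  have horth : ⟪a - h, h⟫ = 0 := by
    exact Submodule.inner_left_of_mem_orthogonal (SetLike.coe_mem _) hperp
  have hpyth : ‖a‖^2 = ‖a - h‖^2 + ‖h‖^2 := by
    have := norm_add_sq_real (a - h) h
    rw [sub_add_cancel, horth] at this
    linarith
  nlinarith [norm_nonneg (a - h), norm_nonneg h, norm_nonneg a]

lemma wnorm_consO_sub_le (a b : Euc d) (t : ι → Euc d) :
    wnorm (consO a t) ≤ wnorm (consO b t) + wnorm (consO (a - b) t) := by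
  rw [wnorm_consO_eq, wnorm_consO_eq, wnorm_consO_eq]
  set S := Submodule.span ℝ (Set.range t)
  have hkey : a - (Submodule.orthogonalProjection S a : Euc d) =
      (b - (Submodule.orthogonalProjection S b : Euc d)) +
      ((a - b) - (Submodule.orthogonalProjection S (a - b) : Euc d)) := by
    rw [map_sub]
    push_cast
    abel
  rw [← add_mul]
  refine mul_le_mul_of_nonneg_right ?_ (wnorm_nonneg t)
  rw [hkey]
  exact norm_add_le _ _


lemma comp_optionSubtypeNe (x : ι → Euc d) (i : ι) :
    x ∘ (Equiv.optionSubtypeNe i) = consO (x i) (fun j : {j // j ≠ i} => x j) := by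
  funext o
  cases o with
  | none => rfl
  | some j => rfl

lemma wnorm_eq_consO (x : ι → Euc d) (i : ι) :
    wnorm x = wnorm (consO (x i) (fun j : {j // j ≠ i} => x j)) := by
  rw [← comp_optionSubtypeNe, wnorm_comp_equiv]

lemma update_comp_optionSubtypeNe (x : ι → Euc d) (i : ι) (b : Euc d) :
    (Function.update x i b) ∘ (Equiv.optionSubtypeNe i)
      = consO b (fun j : {j // j ≠ i} => x j) := by
  funext o
  cases o with
  | none => simp [consO]
  | some j => simp [consO, Function.update_of_ne j.2]

lemma wnorm_update_eq_consO (x : ι → Euc d) (i : ι) (b : Euc d) :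
    wnorm (Function.update x i b) = wnorm (consO b (fun j : {j // j ≠ i} => x j)) := by
  rw [← update_comp_optionSubtypeNe, wnorm_comp_equiv]

lemma wnorm_update_le (x : ι → Euc d) (i : ι) (b : Euc d) :
    wnorm x ≤ wnorm (Function.update x i b) + wnorm (Function.update x i (x i - b)) := by
  rw [wnorm_eq_consO x i, wnorm_update_eq_consO, wnorm_update_eq_consO]
  exact wnorm_consO_sub_le _ _ _

lemma wnorm_strip (x : ι → Euc d) (i : ι) :
    wnorm x ≤ ‖x i‖ * wnorm (fun j : {j // j ≠ i} => x j) := by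
  rw [wnorm_eq_consO x i]
  exact wnorm_consO_le _ _

def res (x : ι → Euc d) (t : Finset ι) : {j // j ∈ t} → Euc d := fun j => x j

lemma wnorm_res_strip (x : ι → Euc d) {t : Finset ι} {a : ι} (ha : a ∈ t) :
    wnorm (res x t) ≤ ‖x a‖ * wnorm (res x (t.erase a)) := by
  have h := wnorm_strip (res x t) ⟨a, ha⟩
  have heq : wnorm (res x (t.erase a)) =
      wnorm (fun j : {j : {j // j ∈ t} // j ≠ ⟨a, ha⟩} => res x t j.1) := by
    let σ : {j // j ∈ t.erase a} ≃ {j : {j // j ∈ t} // j ≠ ⟨a, ha⟩} :=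
      { toFun := fun j => ⟨⟨j.1, Finset.mem_of_mem_erase j.2⟩,
          fun hc => Finset.ne_of_mem_erase j.2 (congrArg Subtype.val hc)⟩
        invFun := fun j => ⟨j.1.1, Finset.mem_erase.mpr
          ⟨fun hc => j.2 (Subtype.ext hc), j.1.2⟩⟩
        left_inv := fun j => rfl
        right_inv := fun j => rfl }
    rw [show res x (t.erase a) = (fun j : {j : {j // j ∈ t} // j ≠ ⟨a, ha⟩} => res x t j.1) ∘ σ
      from rfl, wnorm_comp_equiv]
  rw [heq]
  exact h

lemma wnorm_res_le_prod (x : ι → Euc d) :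
    ∀ (n : ℕ) (t u : Finset ι), u ⊆ t → (t \ u).card = n →
    wnorm (res x t) ≤ (∏ i ∈ t \ u, ‖x i‖) * wnorm (res x u) := by
  intro n
  induction n with
  | zero =>
    intro t u hsub hcard
    have : t = u := Finset.Subset.antisymm
      (by rwa [← Finset.sdiff_eq_empty_iff_subset, ← Finset.card_eq_zero]) hsub
    subst this
    simp [Finset.sdiff_self]
  | succ n ih =>
    intro t u hsub hcard
    have hne : (t \ u).Nonempty := Finset.card_pos.mp (by omega)
    obtain ⟨a, ha⟩ := hne
    have hat : a ∈ t := (Finset.mem_sdiff.mp ha).1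
    have hau : a ∉ u := (Finset.mem_sdiff.mp ha).2
    have h1 : wnorm (res x t) ≤ ‖x a‖ * wnorm (res x (t.erase a)) := wnorm_res_strip x hat
    have hsub' : u ⊆ t.erase a := Finset.subset_erase.mpr ⟨hsub, hau⟩
    have hcar' : (t.erase a \ u).card = n := by
      rw [Finset.erase_sdiff_comm, Finset.card_erase_of_mem ha, hcard]
      omega
    have h2 := ih (t.erase a) u hsub' hcar'
    calc wnorm (res x t) ≤ ‖x a‖ * wnorm (res x (t.erase a)) := h1
      _ ≤ ‖x a‖ * ((∏ i ∈ t.erase a \ u, ‖x i‖) * wnorm (res x u)) :=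
          mul_le_mul_of_nonneg_left h2 (norm_nonneg _)
      _ = (∏ i ∈ t \ u, ‖x i‖) * wnorm (res x u) := by
          rw [Finset.erase_sdiff_comm, ← mul_assoc, ← Finset.mul_prod_erase (t \ u) (fun i => ‖x i‖) ha]

lemma wnorm_res_univ (x : ι → Euc d) : wnorm (res x Finset.univ) = wnorm x := by
  rw [show res x Finset.univ = x ∘ (Equiv.subtypeUnivEquiv (fun i => Finset.mem_univ i))
    from rfl, wnorm_comp_equiv]


lemma res_congr {x y : ι → Euc d} (t : Finset ι) (h : ∀ i ∈ t, x i = y i) :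
    res x t = res y t := funext fun j => h j.1 j.2

lemma master (ε K : ℝ) (hε : 0 ≤ ε) (hK : 1 ≤ K) :
    ∀ (n : ℕ) (x y : ι → Euc d) (s : Finset ι), s.card = n →
    (∀ i, i ∉ s → x i = y i) →
    (∀ i ∈ s, ‖x i‖ ≤ K ∧ ‖y i‖ ≤ K ∧ ‖x i - y i‖ ≤ ε) →
    wnorm x ≤ wnorm y + n * ε * K ^ (n - 1) * wnorm (res x sᶜ) := by
  intro n
  induction n with
  | zero =>
    intro x y s hcard hoff _
    have : x = y := funext fun i => hoff i (by simp [Finset.card_eq_zero.mp hcard])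
    subst this
    simp
  | succ n ih =>
    intro x y s hcard hoff hon
    obtain ⟨a, ha⟩ := Finset.card_pos.mp (by omega : 0 < s.card)
    set x' := Function.update x a (y a) with hx'
    have hWres : 0 ≤ wnorm (res x sᶜ) := wnorm_nonneg _
    -- step bound for the difference term
    have hz : wnorm (Function.update x a (x a - y a)) ≤ ε * K ^ n * wnorm (res x sᶜ) := by
      set z := Function.update x a (x a - y a) with hzdef
      have h0 : wnorm z = wnorm (res z Finset.univ) := (wnorm_res_univ z).symm
      have h1 : wnorm (res z Finset.univ) ≤ (∏ i ∈ Finset.univ \ sᶜ, ‖z i‖) * wnorm (res z sᶜ) :=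
        wnorm_res_le_prod z _ Finset.univ sᶜ (Finset.subset_univ _) rfl
      have hset : Finset.univ \ sᶜ = s := by
        ext i; simp
      have hres : res z sᶜ = res x sᶜ := res_congr _ fun i hi => by
        rw [hzdef, Function.update_of_ne]
        intro hc; subst hc; exact (Finset.mem_compl.mp hi) ha
      have hprod : (∏ i ∈ s, ‖z i‖) ≤ ε * K ^ n := by
        rw [← Finset.mul_prod_erase s (fun i => ‖z i‖) ha]
        have hza : ‖z a‖ ≤ ε := by
          rw [hzdef, Function.update_self]; exact (hon a ha).2.2
        have hrest : (∏ i ∈ s.erase a, ‖z i‖) ≤ K ^ n := by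
          have hc : (s.erase a).card = n := by
                rw [Finset.card_erase_of_mem ha, hcard]
                omega
          calc (∏ i ∈ s.erase a, ‖z i‖) ≤ ∏ i ∈ s.erase a, K := by
                refine Finset.prod_le_prod (fun i _ => norm_nonneg _) (fun i hi => ?_)
                rw [hzdef, Function.update_of_ne (Finset.ne_of_mem_erase hi)]
                exact (hon i (Finset.mem_of_mem_erase hi)).1
            _ = K ^ n := by rw [Finset.prod_const, hc]
        exact mul_le_mul hza hrest (Finset.prod_nonneg fun i _ => norm_nonneg _) hε
      calc wnorm z = wnorm (res z Finset.univ) := h0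
        _ ≤ (∏ i ∈ Finset.univ \ sᶜ, ‖z i‖) * wnorm (res z sᶜ) := h1
        _ = (∏ i ∈ s, ‖z i‖) * wnorm (res x sᶜ) := by rw [hset, hres]
        _ ≤ (ε * K ^ n) * wnorm (res x sᶜ) := mul_le_mul_of_nonneg_right hprod hWres
    -- recursive bound
    have hrec : wnorm x' ≤ wnorm y + n * ε * K ^ (n - 1) * wnorm (res x' (s.erase a)ᶜ) := by
      refine ih x' y (s.erase a) (by rw [Finset.card_erase_of_mem ha, hcard]; omega) ?_ ?_
      · intro i hi
        by_cases hia : i = a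
        · subst hia; rw [hx', Function.update_self]
        · rw [hx', Function.update_of_ne hia]
          exact hoff i (fun his => hi (Finset.mem_erase.mpr ⟨hia, his⟩))
      · intro i hi
        have hia : i ≠ a := Finset.ne_of_mem_erase hi
        rw [hx', Function.update_of_ne hia]
        exact hon i (Finset.mem_of_mem_erase hi)
    -- strip `a` from the complement restriction
    have hstrip : wnorm (res x' (s.erase a)ᶜ) ≤ K * wnorm (res x sᶜ) := by
      have hmem : a ∈ (s.erase a)ᶜ := by simp
      have h1 : wnorm (res x' (s.erase a)ᶜ) ≤ ‖x' a‖ * wnorm (res x' ((s.erase a)ᶜ.erase a)) :=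
        wnorm_res_strip x' hmem
      have hset2 : (s.erase a)ᶜ.erase a = sᶜ := by
        ext i
        by_cases hia : i = a
        · subst hia; simp [ha]
        · simp [Finset.mem_erase, Finset.mem_compl, hia]
      have hres2 : res x' sᶜ = res x sᶜ := res_congr _ fun i hi => by
        rw [hx', Function.update_of_ne]
        intro hc; subst hc; exact (Finset.mem_compl.mp hi) ha
      have hxa : ‖x' a‖ ≤ K := by rw [hx', Function.update_self]; exact (hon a ha).2.1
      calc wnorm (res x' (s.erase a)ᶜ) ≤ ‖x' a‖ * wnorm (res x' ((s.erase a)ᶜ.erase a)) := h1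
        _ = ‖x' a‖ * wnorm (res x sᶜ) := by rw [hset2, hres2]
        _ ≤ K * wnorm (res x sᶜ) := mul_le_mul_of_nonneg_right hxa hWres
    have hKn : (n : ℝ) * ε * K ^ (n - 1) * K ≤ n * ε * K ^ n := by
      cases n with
      | zero => simp
      | succ m =>
        apply le_of_eq
        rw [Nat.add_sub_cancel]
        ring
    have step1 : wnorm x ≤ wnorm x' + wnorm (Function.update x a (x a - y a)) :=
      wnorm_update_le x a (y a)
    have hεK : 0 ≤ ε * K ^ n := mul_nonneg hε (pow_nonneg (le_trans zero_le_one hK) n)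
    calc wnorm x ≤ wnorm x' + wnorm (Function.update x a (x a - y a)) := step1
      _ ≤ (wnorm y + n * ε * K ^ (n - 1) * wnorm (res x' (s.erase a)ᶜ)) +
          ε * K ^ n * wnorm (res x sᶜ) := add_le_add hrec hz
      _ ≤ (wnorm y + n * ε * K ^ (n - 1) * (K * wnorm (res x sᶜ))) +
          ε * K ^ n * wnorm (res x sᶜ) := by
            refine add_le_add_left (add_le_add_right ?_ _) _
            refine mul_le_mul_of_nonneg_left hstrip ?_
            positivity
      _ ≤ (wnorm y + (n * ε * K ^ n) * wnorm (res x sᶜ)) +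
          ε * K ^ n * wnorm (res x sᶜ) := by
            refine add_le_add_left (add_le_add_right ?_ _) _
            calc (n:ℝ) * ε * K ^ (n - 1) * (K * wnorm (res x sᶜ))
                = ((n:ℝ) * ε * K ^ (n - 1) * K) * wnorm (res x sᶜ) := by ring
              _ ≤ (n * ε * K ^ n) * wnorm (res x sᶜ) :=
                  mul_le_mul_of_nonneg_right hKn hWres
      _ = wnorm y + (↑(n + 1)) * ε * K ^ (n + 1 - 1) * wnorm (res x sᶜ) := by
          rw [Nat.add_sub_cancel]
          push_cast
          ring

lemma one_add_pow_le (ε : ℝ) (hε : 0 ≤ ε) :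
    ∀ n : ℕ, (n : ℝ) * ε ≤ 1 / 2 → (1 + ε) ^ n ≤ 1 + 2 * n * ε := by
  intro n
  induction n with
  | zero => simp
  | succ m ih =>
    intro h
    have hm : (m : ℝ) * ε ≤ 1 / 2 := by
      have : (m : ℝ) ≤ (m + 1 : ℕ) := by push_cast; linarith
      nlinarith [Nat.cast_nonneg (α := ℝ) m]
    have h2 : (1 + ε) ^ (m + 1) = (1 + ε) ^ m * (1 + ε) := pow_succ _ _
    have h3 : (1 + ε) ^ m ≤ 1 + 2 * m * ε := ih hm
    have h4 : 2 * (m : ℝ) * ε ≤ 1 := by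
      push_cast at h
      nlinarith
    push_cast
    nlinarith [pow_nonneg (by linarith : (0:ℝ) ≤ 1 + ε) m]

end Wedge

open Wedge Module in
set_option maxHeartbeats 1000000 in
theorem stmt11 {d r : ℕ} (hrd : r ≤ d) (V V' W : Submodule ℝ (Euc d))
    (v v' : Fin r → Euc d) (w : Fin (d - r) → Euc d)
    (hv : LinearIndependent ℝ v) (hv' : LinearIndependent ℝ v') (hw : LinearIndependent ℝ w)
    (hvV : Submodule.span ℝ (Set.range v) = V)
    (hv'V' : Submodule.span ℝ (Set.range v') = V')
    (hwW : Submodule.span ℝ (Set.range w) = W)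
    -- `∠(V, W) > 0`, i.e. `V ∩ W = {0}`
    (hang : 0 < wnorm (Fin.append v w) / (wnorm v * wnorm w))
    (hclose : dH V V' < (wnorm (Fin.append v w) / (wnorm v * wnorm w)) / (2 * r)) :
    V' ⊓ W = ⊥ := by
  by_contra hne
  set A := wnorm (Fin.append v w) / (wnorm v * wnorm w) with hA
  rcases Nat.eq_zero_or_pos r with hr0 | hr
  · subst hr0
    have hV : V = ⊥ := by
      rw [← hvV, Set.range_eq_empty, Submodule.span_empty]
    have hdH : dH V V' = 0 := by
      unfold dH
      convert Real.sSup_empty using 2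
      ext c
      simp only [Set.mem_setOf_eq, Set.mem_empty_iff_false, iff_false, not_exists]
      rintro x ⟨hx, hnx, -⟩
      rw [hV, Submodule.mem_bot] at hx
      rw [hx] at hnx
      simp at hnx
    rw [hdH] at hclose
    norm_num at hclose
  -- main case
  · have hVr : finrank ℝ V = r := by
      rw [← hvV, finrank_span_eq_card hv, Fintype.card_fin]
    let b : OrthonormalBasis (Fin r) ℝ V := (stdOrthonormalBasis ℝ V).reindex (finCongr hVr)
    let e : Fin r → Euc d := fun i => (b i : Euc d)
    have he_on : Orthonormal ℝ e := by
      have hb := b.orthonormal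
      exact ⟨fun i => hb.1 i, fun {i j} hij => hb.2 hij⟩
    have he1 : ∀ i, ‖e i‖ = 1 := he_on.1
    have hge : Wedge.gram e = 1 := by
      ext i j
      rw [Wedge.gram_apply, orthonormal_iff_ite.mp he_on, Matrix.one_apply]
    have hwe : wnorm e = 1 := by
      rw [Wedge.wnorm_eq, hge, Matrix.det_one, Real.sqrt_one]
    have heV : Submodule.span ℝ (Set.range e) = V := by
      have h0 : Set.range e = (V.subtype '' Set.range b) := by
        rw [← Set.range_comp]; rfl
      rw [h0, ← Submodule.map_span, ← b.coe_toBasis, b.toBasis.span_eq]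
      exact Submodule.map_subtype_top V
    have hvmem : ∀ i, v i ∈ V := fun i => hvV ▸ Submodule.subset_span (Set.mem_range_self i)
    set C : Matrix (Fin r) (Fin r) ℝ := Matrix.of fun j i => b.repr ⟨v i, hvmem i⟩ j with hC
    have hvC : v = fun i => ∑ j, C j i • e j := by
      funext i
      have h2 : ((∑ j, b.repr ⟨v i, hvmem i⟩ j • b j : V) : Euc d) = v i := by
        rw [b.sum_repr]
      rw [← h2]
      push_cast
      rfl
    have hwv : wnorm v = |C.det| := by
      rw [hvC, Wedge.wnorm_of_comb, hwe, mul_one]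
    -- append to Sum.elim
    have happ : ∀ (u : Fin r → Euc d), wnorm (Fin.append u w) = wnorm (Sum.elim u w) := by
      intro u
      have h0 : Sum.elim u w = (Fin.append u w) ∘ (finSumFinEquiv (m := r) (n := d - r)) := by
        funext i
        cases i with
        | inl j => simp [Fin.append_left]
        | inr j => simp [Fin.append_right]
      rw [h0, Wedge.wnorm_comp_equiv]
    set B : Matrix (Fin r ⊕ Fin (d - r)) (Fin r ⊕ Fin (d - r)) ℝ :=
      Matrix.fromBlocks C 0 0 1 with hB
    have hBdet : B.det = C.det := by
      rw [hB, Matrix.det_fromBlocks_zero₂₁, Matrix.det_one, mul_one]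
    have hsumelim : Sum.elim v w = fun i => ∑ j, B j i • (Sum.elim e w) j := by
      funext i
      cases i with
      | inl i' =>
        rw [Fintype.sum_sum_type]
        simp only [hB, Matrix.fromBlocks_apply₁₁, Matrix.fromBlocks_apply₂₁, Sum.elim_inl,
          Sum.elim_inr, Matrix.zero_apply, zero_smul, Finset.sum_const_zero, add_zero]
        exact congrFun hvC i'
      | inr i' =>
        rw [Fintype.sum_sum_type]
        simp [hB, Matrix.one_apply]
    have hNv : wnorm (Sum.elim v w) = |C.det| * wnorm (Sum.elim e w) := by
      rw [hsumelim, Wedge.wnorm_of_comb, hBdet]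
    set NE := wnorm (Sum.elim e w) with hNE
    set Ww := wnorm w with hWwdef
    have hWw : 0 < Ww := Wedge.wnorm_pos hw
    have hvpos : 0 < wnorm v := Wedge.wnorm_pos hv
    have hCdet : |C.det| ≠ 0 := by rw [← hwv]; exact hvpos.ne'
    have hA_eq : A = NE / Ww := by
      rw [hA, happ v, hNv, hwv, mul_div_mul_left _ _ hCdet]
    -- the left-block index set
    set ι := (Fin r ⊕ Fin (d - r)) with hι
    set sL : Finset ι := Finset.univ.image Sum.inl with hsL
    have hcardL : sL.card = r := by
      rw [hsL, Finset.card_image_of_injective _ Sum.inl_injective, Finset.card_univ,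
        Fintype.card_fin]
    have hresW : ∀ u : Fin r → Euc d, wnorm (Wedge.res (Sum.elim u w) sLᶜ) = Ww := by
      intro u
      let γ : Fin (d - r) ≃ {j // j ∈ sLᶜ} :=
        { toFun := fun i => ⟨Sum.inr i, by simp [hsL]⟩
          invFun := fun j => match j with
            | ⟨Sum.inr i, _⟩ => i
            | ⟨Sum.inl i, h⟩ => False.elim (by simp [hsL] at h)
          left_inv := fun i => rfl
          right_inv := fun j => match j with
            | ⟨Sum.inr i, _⟩ => rfl
            | ⟨Sum.inl i, h⟩ => False.elim (by simp [hsL] at h) }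
      rw [← Wedge.wnorm_comp_equiv (Wedge.res (Sum.elim u w) sLᶜ) γ]
      rfl
    have hsd : Finset.univ \ sLᶜ = sL := by
      ext j; simp
    -- A ≤ 1
    have hNE_le : NE ≤ Ww := by
      have h1 := Wedge.wnorm_res_le_prod (Sum.elim e w) sL.card Finset.univ sLᶜ
        (Finset.subset_univ _) (by rw [hsd])
      rw [hsd, Wedge.wnorm_res_univ, hresW e] at h1
      have hprod : (∏ i ∈ sL, ‖(Sum.elim e w) i‖) = 1 := by
        rw [hsL, Finset.prod_image (fun a _ b _ h => Sum.inl_injective h)]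
        simp only [Sum.elim_inl]
        exact Finset.prod_eq_one fun i _ => he1 i
      rw [hprod, one_mul] at h1
      exact h1
    have hA1 : A ≤ 1 := by
      rw [hA_eq]
      exact div_le_one_of_le₀ hNE_le hWw.le
    -- Hausdorff distance facts
    set ε := dH V V' with hεdef
    have hbdd : BddAbove {c | ∃ x ∈ V, ‖x‖ = 1 ∧ c = Metric.infDist x (V' : Set (Euc d))} := by
      refine ⟨1, fun c hc => ?_⟩
      obtain ⟨x, hxV, hx1, rfl⟩ := hc
      calc Metric.infDist x (V' : Set (Euc d)) ≤ dist x 0 :=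
            Metric.infDist_le_dist_of_mem (Submodule.zero_mem V')
        _ = 1 := by rw [dist_zero_right, hx1]
    have hεle : ∀ x, x ∈ V → ‖x‖ = 1 → Metric.infDist x (V' : Set (Euc d)) ≤ ε :=
      fun x hx hnx => le_csSup hbdd ⟨x, hx, hnx, rfl⟩
    have hemem : ∀ i, e i ∈ V := fun i => heV ▸ Submodule.subset_span (Set.mem_range_self i)
    have hε0 : 0 ≤ ε := by
      have i0 : Fin r := ⟨0, hr⟩
      exact le_trans Metric.infDist_nonneg (hεle (e i0) (hemem i0) (he1 i0))
    -- choose closest points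
    have hV'ne : (V' : Set (Euc d)).Nonempty := ⟨0, Submodule.zero_mem V'⟩
    have hV'cl : IsClosed (V' : Set (Euc d)) := Submodule.closed_of_finiteDimensional V'
    choose p hpV' hpd using fun i => hV'cl.exists_infDist_eq_dist hV'ne (e i)
    have hpe : ∀ i, ‖e i - p i‖ ≤ ε := fun i => by
      rw [← dist_eq_norm, ← hpd i]
      exact hεle (e i) (hemem i) (he1 i)
    have hpn : ∀ i, ‖p i‖ ≤ 1 + ε := fun i => by
      calc ‖p i‖ = ‖e i - (e i - p i)‖ := by rw [sub_sub_cancel]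
        _ ≤ ‖e i‖ + ‖e i - p i‖ := norm_sub_le _ _
        _ ≤ 1 + ε := by rw [he1 i]; exact add_le_add_right (hpe i) 1
    -- apply master inequality
    have hM := Wedge.master ε (1 + ε) hε0 (by linarith) r (Sum.elim e w) (Sum.elim p w) sL
      hcardL ?_ ?_
    rotate_left
    · intro i hi
      cases i with
      | inl k => exact absurd (by simp [hsL] : Sum.inl k ∈ sL) hi
      | inr k => rfl
    · intro i hi
      cases i with
      | inl k =>
        refine ⟨by rw [Sum.elim_inl, he1 k]; linarith, by rw [Sum.elim_inl]; exact hpn k, ?_⟩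
        show ‖e k - p k‖ ≤ ε
        exact hpe k
      | inr k => exact absurd hi (by simp [hsL])
    -- wnorm of the p-family is zero
    have hdepG : ¬ LinearIndependent ℝ (Sum.elim p w) := by
      intro hind
      have hV'r : finrank ℝ V' = r := by
        rw [← hv'V', finrank_span_eq_card hv', Fintype.card_fin]
      have hWr : finrank ℝ W = d - r := by
        rw [← hwW, finrank_span_eq_card hw, Fintype.card_fin]
      have hipos : finrank ℝ (V' ⊓ W : Submodule ℝ (Euc d)) ≠ 0 := by
        exact fun h0 => hne (Submodule.finrank_eq_zero.mp h0)
      have hsup := Submodule.finrank_sup_add_finrank_inf_eq V' W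
      rw [hV'r, hWr] at hsup
      have hwmem : ∀ i, w i ∈ W := fun i => hwW ▸ Submodule.subset_span (Set.mem_range_self i)
      have hmemsup : ∀ i, Sum.elim p w i ∈ (V' ⊔ W : Submodule ℝ (Euc d)) := by
        intro i
        cases i with
        | inl k => exact Submodule.mem_sup_left (hpV' k)
        | inr k => exact Submodule.mem_sup_right (hwmem k)
      have hG' : LinearIndependent ℝ
          (fun i => (⟨Sum.elim p w i, hmemsup i⟩ : (V' ⊔ W : Submodule ℝ (Euc d)))) :=
        LinearIndependent.of_comp (V' ⊔ W).subtype hind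
      have hcard2 := hG'.fintype_card_le_finrank
      rw [Fintype.card_sum, Fintype.card_fin, Fintype.card_fin] at hcard2
      omega
    have hG0 : wnorm (Sum.elim p w) = 0 := Wedge.wnorm_eq_zero_of_dep hdepG
    rw [hG0, zero_add, hresW e] at hM
    -- ε is small
    have h2r : (0:ℝ) < 2 * r := by positivity
    have hεA : ε < A / (2 * r) := hclose
    have hεsmall : (r : ℝ) * ε ≤ 1 / 2 := by
      have h1 : ε < 1 / (2 * r) := lt_of_lt_of_le hεA ((div_le_div_iff_of_pos_right h2r).mpr hA1)
      have h2 : ε * (2 * r) < 1 := (lt_div_iff₀ h2r).mp h1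
      nlinarith
    have hpow : (1 + ε) ^ (r - 1) ≤ 2 := by
      have h1 : ((r - 1 : ℕ) : ℝ) * ε ≤ 1 / 2 := by
        have : ((r - 1 : ℕ) : ℝ) ≤ r := by
          have := Nat.sub_le r 1
          exact_mod_cast this
        nlinarith
      have h2 := Wedge.one_add_pow_le ε hε0 (r - 1) h1
      linarith
    -- final contradiction
    have hfin : NE ≤ (r : ℝ) * ε * 2 * Ww := by
      calc NE ≤ (r : ℝ) * ε * (1 + ε) ^ (r - 1) * Ww := hM
        _ ≤ (r : ℝ) * ε * 2 * Ww := by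
            refine mul_le_mul_of_nonneg_right ?_ hWw.le
            refine mul_le_mul_of_nonneg_left hpow ?_
            positivity
    have hlt : (r : ℝ) * ε * 2 * Ww < NE := by
      have h3 : ε * (2 * r) < A := (lt_div_iff₀ h2r).mp hεA
      have h4 : A * Ww = NE := by
        rw [hA_eq, div_mul_cancel₀ _ hWw.ne']
      nlinarith
    linarith
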